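/- If the graph Ĝ_{f,B} (using δ̂(a,a') = inf { v(a)−v(a') : f(v,B)=a over all B } in place of δ) contains no negative cycle, then f : V × B → A with fully private budgets (arbitrary budget reports allowed) is implementable. -/

import Mathlib

noncomputable section

open scoped Classical

variable {A : Type*} {N : Type*}

/-- minimum reported budget required to obtain outcome `a` -/
def beta (V : Set (A → ℝ)) (Bud : Set EReal) (f : (A → ℝ) → EReal → A) (a : A) : EReal :=
  sInf {B | B ∈ Bud ∧ ∃ v ∈ V, f v B = a}

/-- minimum reported value required to obtain outcome `a` -/
def omegaV (V : Set (A → ℝ)) (Bud : Set EReal) (f : (A → ℝ) → EReal → A) (a : A) : EReal :=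
  sInf {x : EReal | ∃ v ∈ V, ∃ B ∈ Bud, f v B = a ∧ x = ((v a : ℝ) : EReal)}

def theta (V : Set (A → ℝ)) (Bud : Set EReal) (f : (A → ℝ) → EReal → A) (a : A) : EReal :=
  min (beta V Bud f a) (omegaV V Bud f a)

def delta (V : Set (A → ℝ)) (Bud : Set EReal) (f : (A → ℝ) → EReal → A) (a a' : A) : EReal :=
  sInf {x : EReal | ∃ v ∈ V, ∃ B ∈ Bud, beta V Bud f a' ≤ B ∧ f v B = a ∧
    x = ((v a - v a' : ℝ) : EReal)}

def deltaHat (V : Set (A → ℝ)) (Bud : Set EReal) (f : (A → ℝ) → EReal → A) (a a' : A) : EReal :=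
  sInf {x : EReal | ∃ v ∈ V, ∃ B ∈ Bud, f v B = a ∧ x = ((v a - v a' : ℝ) : EReal)}

/-- arc length of the graph `G_{f,B}` -/
def glen (V : Set (A → ℝ)) (Bud : Set EReal) (f : (A → ℝ) → EReal → A) (a a' : A) : EReal :=
  min (delta V Bud f a a') (theta V Bud f a)

/-- arc length of the graph `Ĝ_{f,B}` -/
def glenHat (V : Set (A → ℝ)) (Bud : Set EReal) (f : (A → ℝ) → EReal → A) (a a' : A) : EReal :=
  min (deltaHat V Bud f a a') (theta V Bud f a)

/-- length of the closed walk through the nodes of the list `c` -/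
def cycLen (l : N → N → EReal) (c : List N) : EReal :=
  ((c.zip (c.rotate 1)).map fun pr => l pr.1 pr.2).sum

def NoNegCycle (l : N → N → EReal) : Prop :=
  ∀ c : List N, c ≠ [] → 0 ≤ cycLen l c

def pathLen (l : N → N → EReal) : List N → EReal
  | [] => 0
  | [_] => 0
  | x :: y :: t => l x y + pathLen l (y :: t)

/-- shortest-path distance from `i` to `k` in the complete graph with lengths `l` -/
def distG (l : N → N → EReal) (i k : N) : EReal :=
  sInf (pathLen l '' {c : List N | c.head? = some i ∧ c.getLast? = some k})

def Onto (V : Set (A → ℝ)) (Bud : Set EReal) (f : (A → ℝ) → EReal → A) : Prop :=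
  ∀ a : A, ∃ v ∈ V, ∃ B ∈ Bud, f v B = a

def NonnegV (V : Set (A → ℝ)) : Prop := ∀ v ∈ V, ∀ a, 0 ≤ v a

def NonnegB (Bud : Set EReal) : Prop := ∀ B ∈ Bud, 0 ≤ B

/-- `p` gives per-outcome prices implementing `f` : full incentive compatibility
(arbitrary misreports of value and budget), IR, BF and NPT. -/
def Implements (V : Set (A → ℝ)) (Bud : Set EReal) (f : (A → ℝ) → EReal → A)
    (p : A → ℝ) : Prop :=
  (∀ v ∈ V, ∀ B ∈ Bud, ∀ v' ∈ V, ∀ B' ∈ Bud,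
      ((p (f v' B') : ℝ) : EReal) ≤ B →
      v (f v' B') - p (f v' B') ≤ v (f v B) - p (f v B)) ∧
  (∀ v ∈ V, ∀ B ∈ Bud, p (f v B) ≤ v (f v B)) ∧
  (∀ v ∈ V, ∀ B ∈ Bud, ((p (f v B) : ℝ) : EReal) ≤ B) ∧
  (∀ v ∈ V, ∀ B ∈ Bud, 0 ≤ p (f v B))

/-- as `Implements`, but budget over-reporting is impossible: `B' ≤ B`. -/
def ImplementsNoOver (V : Set (A → ℝ)) (Bud : Set EReal) (f : (A → ℝ) → EReal → A)
    (p : A → ℝ) : Prop :=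
  (∀ v ∈ V, ∀ B ∈ Bud, ∀ v' ∈ V, ∀ B' ∈ Bud, B' ≤ B →
      ((p (f v' B') : ℝ) : EReal) ≤ B →
      v (f v' B') - p (f v' B') ≤ v (f v B) - p (f v B)) ∧
  (∀ v ∈ V, ∀ B ∈ Bud, p (f v B) ≤ v (f v B)) ∧
  (∀ v ∈ V, ∀ B ∈ Bud, ((p (f v B) : ℝ) : EReal) ≤ B) ∧
  (∀ v ∈ V, ∀ B ∈ Bud, 0 ≤ p (f v B))

/-- arcs of the augmented graph `H` : `none` is the special node `0`. -/
def HArc (d : A → A → EReal) : Option A → Option A → Prop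
  | some i, some k => d i k < ⊤
  | none, some _ => True
  | some _, none => True
  | none, none => False

/-- arc lengths of the augmented graph `H`. -/
def HLen (d : A → A → EReal) (t : A → EReal) : Option A → Option A → EReal
  | some i, some k => d i k
  | none, some _ => 0
  | some i, none => t i
  | none, none => 0

def NoNegCycleH (d : A → A → EReal) (t : A → EReal) : Prop :=
  ∀ c : List (Option A), c ≠ [] →
    (∀ pr ∈ c.zip (c.rotate 1), HArc d pr.1 pr.2) →
    0 ≤ cycLen (HLen d t) c

/-- shortest-path distance from node `i` to the special node `0` in `H`. -/
def distH (d : A → A → EReal) (t : A → EReal) (i : A) : EReal :=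
  sInf (pathLen (HLen d t) ''
    {c : List (Option A) | c.head? = some (some i) ∧ c.getLast? = some none ∧
      ∀ pr ∈ c.zip c.tail, HArc d pr.1 pr.2})

namespace Stmt9Aux

lemma pathLen_cons_cons (l : N → N → EReal) (x y : N) (t : List N) :
    pathLen l (x :: y :: t) = l x y + pathLen l (y :: t) := rfl

lemma pathLen_mono {l l' : N → N → EReal} (h : ∀ i k, l i k ≤ l' i k) :
    ∀ c : List N, pathLen l c ≤ pathLen l' c
  | [] => le_refl _
  | [_] => le_refl _
  | x :: y :: t => by
      rw [pathLen_cons_cons, pathLen_cons_cons]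
      exact add_le_add (h x y) (pathLen_mono h (y :: t))

lemma zip_rotate_sum (l : N → N → EReal) :
    ∀ (t : List N) (a a0 : N),
      (((a :: t).zip (t ++ [a0])).map (fun pr => l pr.1 pr.2)).sum
        = pathLen l (a :: t) + l (t.getLastD a) a0
  | [], a, a0 => by simp [pathLen]
  | b :: t', a, a0 => by
      have ih := zip_rotate_sum l t' b a0
      simp only [List.cons_append, List.zip_cons_cons, List.map_cons, List.sum_cons] at *
      rw [ih, pathLen_cons_cons, List.getLastD_cons, add_assoc]

lemma cycLen_cons (l : N → N → EReal) (a : N) (t : List N) :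
    cycLen l (a :: t) = pathLen l (a :: t) + l (t.getLastD a) a := by
  have hrot : (a :: t).rotate 1 = t ++ [a] := by
    rw [List.rotate_cons_succ, List.rotate_zero]
  rw [cycLen, hrot, zip_rotate_sum]

variable (V : Set (A → ℝ)) (Bud : Set EReal) (f : (A → ℝ) → EReal → A)

lemma theta_nonneg (hV : NonnegV V) (hB : NonnegB Bud) (a : A) :
    0 ≤ theta V Bud f a := by
  refine le_min (le_sInf ?_) (le_sInf ?_)
  · rintro B ⟨hBud, -⟩; exact hB B hBud
  · rintro x ⟨v, hv, B, hBud, -, rfl⟩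
    exact EReal.coe_nonneg.2 (hV v hv a)

lemma theta_lt_top (honto : Onto V Bud f) (a : A) : theta V Bud f a < ⊤ := by
  obtain ⟨v, hv, B, hBud, hf⟩ := honto a
  have h1 : omegaV V Bud f a ≤ ((v a : ℝ) : EReal) :=
    sInf_le ⟨v, hv, B, hBud, hf, rfl⟩
  exact lt_of_le_of_lt ((min_le_right _ _).trans h1) (EReal.coe_lt_top _)

lemma deltaHat_lt_top (honto : Onto V Bud f) (a a' : A) :
    deltaHat V Bud f a a' < ⊤ := by
  obtain ⟨v, hv, B, hBud, hf⟩ := honto a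
  have h1 : deltaHat V Bud f a a' ≤ ((v a - v a' : ℝ) : EReal) :=
    sInf_le ⟨v, hv, B, hBud, hf, rfl⟩
  exact lt_of_le_of_lt h1 (EReal.coe_lt_top _)

lemma deltaHat_ne_bot (hG : NoNegCycle (glenHat V Bud f)) (a a' : A) :
    deltaHat V Bud f a a' ≠ ⊥ := by
  intro hbot
  have h1 : glenHat V Bud f a a' = ⊥ :=
    le_bot_iff.1 (hbot ▸ min_le_left _ (theta V Bud f a))
  have h2 := hG [a, a'] (by simp)
  rw [cycLen_cons] at h2
  rw [show ([a'] : List A).getLastD a = a' from rfl,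
    pathLen_cons_cons, h1, EReal.bot_add, EReal.bot_add] at h2
  exact absurd h2 (by simp)

/-- candidate price set: lengths of paths from `a` to the virtual node `0`. -/
def Pset (a : A) : Set EReal :=
  {x | ∃ t : List A,
    x = pathLen (deltaHat V Bud f) (a :: t) + theta V Bud f (t.getLastD a)}

lemma theta_mem_Pset (a : A) : theta V Bud f a ∈ Pset V Bud f a :=
  ⟨[], by simp [pathLen]⟩

lemma Pset_nonneg (hG : NoNegCycle (glenHat V Bud f)) (a : A) :
    ∀ x ∈ Pset V Bud f a, 0 ≤ x := by
  rintro x ⟨t, rfl⟩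
  have h0 := hG (a :: t) (by simp)
  rw [cycLen_cons] at h0
  refine h0.trans (add_le_add
    (pathLen_mono (fun i k => min_le_left _ _) _) (min_le_right _ _))

lemma q_triangle (hG : NoNegCycle (glenHat V Bud f)) (honto : Onto V Bud f)
    (a a' : A) :
    sInf (Pset V Bud f a) ≤ deltaHat V Bud f a a' + sInf (Pset V Bud f a') := by
  obtain ⟨r, hr⟩ : ∃ r : ℝ, deltaHat V Bud f a a' = (r : EReal) :=
    ⟨(deltaHat V Bud f a a').toReal,
      (EReal.coe_toReal (deltaHat_lt_top V Bud f honto a a').ne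
        (deltaHat_ne_bot V Bud f hG a a')).symm⟩
  rw [hr]
  have key : ∀ x ∈ Pset V Bud f a', sInf (Pset V Bud f a) - (r : EReal) ≤ x := by
    rintro x ⟨t, rfl⟩
    rw [EReal.sub_le_iff_le_add (Or.inl (EReal.coe_ne_bot r))
      (Or.inl (EReal.coe_ne_top r))]
    have hmem : (r : EReal) + (pathLen (deltaHat V Bud f) (a' :: t)
        + theta V Bud f (t.getLastD a')) ∈ Pset V Bud f a := by
      refine ⟨a' :: t, ?_⟩
      rw [pathLen_cons_cons, List.getLastD_cons, hr, add_assoc]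
    calc sInf (Pset V Bud f a) ≤ _ := sInf_le hmem
    _ = _ + (r : EReal) := add_comm _ _
  have h2 := le_sInf key
  rw [EReal.sub_le_iff_le_add (Or.inl (EReal.coe_ne_bot r))
    (Or.inl (EReal.coe_ne_top r))] at h2
  exact h2.trans_eq (add_comm _ _)

end Stmt9Aux

theorem stmt9' {A : Type*} (V : Set (A → ℝ)) (Bud : Set EReal)
    (f : (A → ℝ) → EReal → A)
    (hV : NonnegV V) (hB : NonnegB Bud) (honto : Onto V Bud f)
    (hG : NoNegCycle (glenHat V Bud f)) :
    ∃ p : A → ℝ, Implements V Bud f p := by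
  classical
  set q : A → EReal := fun a => sInf (Stmt9Aux.Pset V Bud f a) with hqdef
  have hq0 : ∀ a, 0 ≤ q a := fun a => le_sInf (Stmt9Aux.Pset_nonneg V Bud f hG a)
  have hqθ : ∀ a, q a ≤ theta V Bud f a :=
    fun a => sInf_le (Stmt9Aux.theta_mem_Pset V Bud f a)
  have hqtop : ∀ a, q a ≠ ⊤ :=
    fun a => ((hqθ a).trans_lt (Stmt9Aux.theta_lt_top V Bud f honto a)).ne
  have hqbot : ∀ a, q a ≠ ⊥ := fun a => (lt_of_lt_of_le (bot_lt_iff_ne_bot.2 (by simp)) (hq0 a)).ne'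
  have hcoe : ∀ a, (((q a).toReal : ℝ) : EReal) = q a :=
    fun a => EReal.coe_toReal (hqtop a) (hqbot a)
  refine ⟨fun a => (q a).toReal, ?_, ?_, ?_, ?_⟩
  · -- IC
    intro v hv B hB' v' hv' B' hB'' _
    have h1 : q (f v B) ≤ deltaHat V Bud f (f v B) (f v' B') + q (f v' B') :=
      Stmt9Aux.q_triangle V Bud f hG honto _ _
    have h2 : deltaHat V Bud f (f v B) (f v' B')
        ≤ ((v (f v B) - v (f v' B') : ℝ) : EReal) :=
      sInf_le ⟨v, hv, B, hB', rfl, rfl⟩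
    have h3 : q (f v B) ≤ ((v (f v B) - v (f v' B') : ℝ) : EReal) + q (f v' B') :=
      h1.trans (add_le_add_left h2 _)
    rw [← hcoe (f v B), ← hcoe (f v' B'), ← EReal.coe_add, EReal.coe_le_coe_iff] at h3
    linarith
  · -- IR
    intro v hv B hB'
    have h1 : q (f v B) ≤ ((v (f v B) : ℝ) : EReal) :=
      (hqθ _).trans ((min_le_right _ _).trans (sInf_le ⟨v, hv, B, hB', rfl, rfl⟩))
    rw [← hcoe (f v B), EReal.coe_le_coe_iff] at h1
    exact h1
  · -- BF
    intro v hv B hB'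
    have h1 : q (f v B) ≤ B :=
      (hqθ _).trans ((min_le_left _ _).trans (sInf_le ⟨hB', v, hv, rfl⟩))
    rw [← hcoe (f v B)] at h1
    exact h1
  · -- NPT
    intro v hv B hB'
    have := hq0 (f v B)
    rw [← hcoe (f v B)] at this
    exact_mod_cast this

/-- sufficiency for fully private budgets. If the graph `Ĝ_{f,B}`
(with `δ̂` in place of `δ`) contains no negative cycle, then `f` is implementable. -/
theorem stmt9 {A : Type*} (V : Set (A → ℝ)) (Bud : Set EReal)
    (f : (A → ℝ) → EReal → A)
    (hV : NonnegV V) (hB : NonnegB Bud) (honto : Onto V Bud f)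
    (hG : NoNegCycle (glenHat V Bud f)) :
    ∃ p : A → ℝ, Implements V Bud f p := by
  exact stmt9' V Bud f hV hB honto hG
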